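/- arXiv:2510.20763 — 2 statements merged into one kernel-verified Lean document; each statement's English description precedes it below -/
import Mathlib

section
/- Let ζ ∈ ℝ with ζ ≠ β and define u(t) = f(t;ζ)^γ for t ∈ [0,T]. Then u is differentiable, strictly positive, u(T) = 1, and u satisfies the nonlinear ODE 0 = u'(t) + ζ·u(t) + γ·exp(−(β/γ)t)·u(t)^{1−1/γ} for all t ∈ [0,T]. -/
/-- Fix `γ > 0`, `β > 0`, `T > 0` and `ζ ≠ β`, let
`f(t;ζ) = exp((ζ/γ)(T−t)) + (γ/(ζ−β))·exp(−(ζ/γ)t)·(exp(((ζ−β)/γ)T) − exp(((ζ−β)/γ)t))`,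
and set `u(t) = f(t;ζ)^γ`.  Then `u` is differentiable and strictly positive on `[0,T]`,
`u(T) = 1`, and `0 = u'(t) + ζ·u(t) + γ·exp(−(β/γ)t)·u(t)^{1−1/γ}` for all `t ∈ [0,T]`. -/
theorem stmt2 (γ β T : ℝ) (hγ : 0 < γ) (hβ : 0 < β) (hT : 0 < T)
    (ζ : ℝ) (hζ : ζ ≠ β) (f : ℝ → ℝ)
    (hf : ∀ t : ℝ, f t =
      Real.exp ((ζ / γ) * (T - t)) +
        (γ / (ζ - β)) * Real.exp (-(ζ / γ) * t) *
          (Real.exp (((ζ - β) / γ) * T) - Real.exp (((ζ - β) / γ) * t)))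
    (u : ℝ → ℝ) (hu : ∀ t : ℝ, u t = f t ^ γ) :
    u T = 1 ∧
      ∀ t ∈ Set.Icc (0 : ℝ) T,
        0 < u t ∧
        HasDerivAt u (-(ζ * u t) - γ * Real.exp (-(β / γ) * t) * u t ^ (1 - 1 / γ)) t := by
  have hγ0 : γ ≠ 0 := ne_of_gt hγ
  have hsub : ζ - β ≠ 0 := sub_ne_zero.mpr hζ
  -- positivity of f on [0,T]
  have hfpos : ∀ t ∈ Set.Icc (0 : ℝ) T, 0 < f t := by
    intro t ht
    rw [hf]
    have h2 : 0 ≤ (γ / (ζ - β)) * Real.exp (-(ζ / γ) * t) *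
        (Real.exp (((ζ - β) / γ) * T) - Real.exp (((ζ - β) / γ) * t)) := by
      rcases lt_or_gt_of_ne hsub with h | h
      · -- ζ - β < 0
        have hc : γ / (ζ - β) ≤ 0 := le_of_lt (div_neg_of_pos_of_neg hγ h)
        have hb : Real.exp (((ζ - β) / γ) * T) - Real.exp (((ζ - β) / γ) * t) ≤ 0 := by
          have : ((ζ - β) / γ) * T ≤ ((ζ - β) / γ) * t := by
            have hcoef : (ζ - β) / γ ≤ 0 := le_of_lt (div_neg_of_neg_of_pos h hγ)
            nlinarith [ht.2]
          linarith [Real.exp_le_exp.mpr this]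
        have hc' : (γ / (ζ - β)) * Real.exp (-(ζ / γ) * t) ≤ 0 :=
          mul_nonpos_of_nonpos_of_nonneg hc (le_of_lt (Real.exp_pos _))
        nlinarith [hc', hb]
      · -- ζ - β > 0
        have hc : 0 ≤ γ / (ζ - β) := le_of_lt (div_pos hγ h)
        have hb : 0 ≤ Real.exp (((ζ - β) / γ) * T) - Real.exp (((ζ - β) / γ) * t) := by
          have : ((ζ - β) / γ) * t ≤ ((ζ - β) / γ) * T := by
            have hcoef : 0 ≤ (ζ - β) / γ := le_of_lt (div_pos h hγ)
            nlinarith [ht.2]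
          linarith [Real.exp_le_exp.mpr this]
        exact mul_nonneg (mul_nonneg hc (le_of_lt (Real.exp_pos _))) hb
    linarith [Real.exp_pos ((ζ / γ) * (T - t))]
  have hfT : f T = 1 := by rw [hf]; simp
  -- derivative of f
  have hfd : ∀ t : ℝ, HasDerivAt f (-(ζ / γ) * f t - Real.exp (-(β / γ) * t)) t := by
    intro t
    have hfun : f = fun s : ℝ =>
        Real.exp ((ζ / γ) * (T - s)) +
          (γ / (ζ - β)) * Real.exp (-(ζ / γ) * s) *
            (Real.exp (((ζ - β) / γ) * T) - Real.exp (((ζ - β) / γ) * s)) := funext hf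
    have h1 : HasDerivAt (fun s : ℝ => Real.exp ((ζ / γ) * (T - s)))
        (Real.exp ((ζ / γ) * (T - t)) * ((ζ / γ) * (-1))) t := by
      exact (((hasDerivAt_id t).const_sub T).const_mul (ζ / γ)).exp
    have h2 : HasDerivAt (fun s : ℝ => Real.exp (-(ζ / γ) * s))
        (Real.exp (-(ζ / γ) * t) * (-(ζ / γ) * 1)) t := by
      exact ((hasDerivAt_id t).const_mul (-(ζ / γ))).exp
    have h3 : HasDerivAt (fun s : ℝ => Real.exp (((ζ - β) / γ) * T) - Real.exp (((ζ - β) / γ) * s))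
        (0 - Real.exp (((ζ - β) / γ) * t) * ((ζ - β) / γ * 1)) t := by
      exact (hasDerivAt_const t _).sub (((hasDerivAt_id t).const_mul ((ζ - β) / γ)).exp)
    have h4 := ((h2.const_mul (γ / (ζ - β))).mul h3)
    have h5 := h1.add h4
    replace h5 : HasDerivAt f _ t := h5.congr_of_eventuallyEq (Filter.Eventually.of_forall fun s => congrFun hfun s)
    convert h5 using 1
    rw [hf]
    have key : Real.exp (-(ζ / γ) * t) * Real.exp (((ζ - β) / γ) * t) =
        Real.exp (-(β / γ) * t) := by
      rw [← Real.exp_add]; congr 1; field_simp; ring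
    field_simp
    linear_combination (norm := ring_nf) (γ * (ζ - β)) * key
  refine ⟨by rw [hu, hfT, Real.one_rpow], ?_⟩
  intro t ht
  have hpos := hfpos t ht
  have hupos : 0 < u t := by rw [hu]; exact Real.rpow_pos_of_pos hpos γ
  refine ⟨hupos, ?_⟩
  have hd : HasDerivAt u
      ((-(ζ / γ) * f t - Real.exp (-(β / γ) * t)) * γ * f t ^ (γ - 1)) t := by
    have : u = fun s => f s ^ γ := funext hu
    rw [this]
    exact (hfd t).rpow_const (Or.inl (ne_of_gt hpos))
  convert hd using 1
  rw [hu]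
  have hexp : (f t ^ γ) ^ (1 - 1 / γ) = f t ^ (γ - 1) := by
    rw [← Real.rpow_mul (le_of_lt hpos)]
    congr 1; field_simp
  rw [hexp]
  have hpow : f t ^ γ = f t * f t ^ (γ - 1) := by
    nth_rewrite 2 [← Real.rpow_one (f t)]
    rw [← Real.rpow_add hpos]
    ring_nf
  rw [hpow]
  field_simp
end

section
/- Define v(t,w) = f(t;ν)^γ · w^{1−γ}/(1−γ) on [0,T]×(0,∞). Then v(T,w) = w^{1−γ}/(1−γ) for all w > 0, and for every (t,w) ∈ [0,T)×(0,∞): 0 = ∂_t v(t,w) + sup over (π,c) ∈ ℝ^d×(0,∞) of [ w·∂_w v(t,w)·(r + π^⊤(μ̃ − r·1_d)) + (w²/2)·∂_{ww}v(t,w)·π^⊤ã π − c·∂_w v(t,w) + e^{−βt}·c^{1−γ}/(1−γ) ]. Moreover this supremum is attained at the unique maximizer π* = (1/γ)·ã^{−1}(μ̃ − r·1_d), c* = e^{−(β/γ)t}·w/f(t;ν). -/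
open Matrix

private lemma bern_aux {p u : ℝ} (hp0 : p ≠ 0) (hp1 : p < 1) (hu : 0 < u) (hu1 : u ≠ 1) :
    u ^ p / p - 1 / p < u - 1 := by
  rcases lt_or_gt_of_ne hp0 with hp | hp
  · have key : 1 + p * (u - 1) < u ^ p := by
      rcases le_or_gt (1 + p * (u - 1)) 0 with h | h
      · exact h.trans_lt (Real.rpow_pos_of_pos hu _)
      · rw [Real.rpow_def_of_pos hu, ← Real.exp_log h]
        apply Real.exp_lt_exp.mpr
        have h2 : Real.log (1 + p * (u - 1)) ≤ p * (u - 1) := by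
          have := Real.log_le_sub_one_of_pos h; linarith
        have h3 : p * (u - 1) < p * Real.log u :=
          mul_lt_mul_of_neg_left (Real.log_lt_sub_one_of_pos hu hu1) hp
        linarith [h2, h3]
    have hnum : 0 < u ^ p - (1 + p * (u - 1)) := by linarith
    have hq := div_neg_of_pos_of_neg hnum hp
    have heq : u ^ p / p - 1 / p - (u - 1) = (u ^ p - (1 + p * (u - 1))) / p := by
      field_simp; ring
    linarith [heq ▸ hq]
  · have key : u ^ p < 1 + p * (u - 1) := by
      have := rpow_one_add_lt_one_add_mul_self (s := u - 1) (by linarith)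
        (by intro h; exact hu1 (by linarith)) hp hp1
      simpa using this
    calc u ^ p / p - 1 / p < (1 + p * (u - 1)) / p - 1 / p := by
          have := div_lt_div_of_pos_right key hp; linarith
      _ = u - 1 := by field_simp; ring

private lemma dot_symm' {d : ℕ} {a : Matrix (Fin d) (Fin d) ℝ} (ha : a.PosDef)
    (x y : Fin d → ℝ) : x ⬝ᵥ a.mulVec y = y ⬝ᵥ a.mulVec x := by
  have hs : aᵀ = a := by
    have := ha.isHermitian
    rwa [Matrix.IsHermitian, Matrix.conjTranspose_eq_transpose_of_trivial] at this
  rw [Matrix.dotProduct_mulVec, ← Matrix.mulVec_transpose, hs, dotProduct_comm]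

private lemma pos_dot' {d : ℕ} {a : Matrix (Fin d) (Fin d) ℝ} (ha : a.PosDef)
    {x : Fin d → ℝ} (hx : x ≠ 0) : 0 < x ⬝ᵥ a.mulVec x := by
  simpa using ha.dotProduct_mulVec_pos hx

private lemma fT_eq {γ β T ν : ℝ} (f : ℝ → ℝ)
    (hf : ∀ t : ℝ, f t =
      Real.exp ((ν / γ) * (T - t)) +
        (γ / (ν - β)) * Real.exp (-(ν / γ) * t) *
          (Real.exp (((ν - β) / γ) * T) - Real.exp (((ν - β) / γ) * t))) :
    f T = 1 := by
  rw [hf T]; simp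

private lemma f_pos {γ β T ν : ℝ} (hγ : 0 < γ) (hνβ : ν ≠ β) (f : ℝ → ℝ)
    (hf : ∀ t : ℝ, f t =
      Real.exp ((ν / γ) * (T - t)) +
        (γ / (ν - β)) * Real.exp (-(ν / γ) * t) *
          (Real.exp (((ν - β) / γ) * T) - Real.exp (((ν - β) / γ) * t))) :
    ∀ t ≤ T, 0 < f t := by
  intro t ht
  rw [hf t]
  have hE1 : 0 < Real.exp ((ν / γ) * (T - t)) := Real.exp_pos _
  have hE2 : 0 < Real.exp (-(ν / γ) * t) := Real.exp_pos _
  have key : 0 ≤ (γ / (ν - β)) * Real.exp (-(ν / γ) * t) *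
      (Real.exp (((ν - β) / γ) * T) - Real.exp (((ν - β) / γ) * t)) := by
    rcases lt_or_gt_of_ne hνβ with h | h
    · have hk : γ / (ν - β) < 0 := div_neg_of_pos_of_neg hγ (by linarith)
      have hmono : Real.exp (((ν - β) / γ) * T) ≤ Real.exp (((ν - β) / γ) * t) := by
        apply Real.exp_le_exp.mpr
        have hc : (ν - β) / γ < 0 := div_neg_of_neg_of_pos (by linarith) hγ
        nlinarith
      nlinarith [mul_nonneg (mul_nonneg (neg_nonneg.mpr hk.le) (sub_nonneg.mpr hmono)) hE2.le]
    · have hk : 0 < γ / (ν - β) := div_pos hγ (by linarith)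
      have hmono : Real.exp (((ν - β) / γ) * t) ≤ Real.exp (((ν - β) / γ) * T) := by
        apply Real.exp_le_exp.mpr
        have hc : 0 < (ν - β) / γ := div_pos (by linarith) hγ
        nlinarith
      nlinarith [mul_nonneg (mul_nonneg hk.le (sub_nonneg.mpr hmono)) hE2.le]
  linarith

private lemma f_deriv {γ β T ν : ℝ} (hγ : 0 < γ) (hνβ : ν ≠ β) (f : ℝ → ℝ)
    (hf : ∀ t : ℝ, f t =
      Real.exp ((ν / γ) * (T - t)) +
        (γ / (ν - β)) * Real.exp (-(ν / γ) * t) *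
          (Real.exp (((ν - β) / γ) * T) - Real.exp (((ν - β) / γ) * t))) :
    ∀ t : ℝ, HasDerivAt f (-(ν / γ) * f t - Real.exp (-(β / γ) * t)) t := by
  intro t
  have hfe : f = fun t => Real.exp ((ν / γ) * (T - t)) +
        (γ / (ν - β)) * Real.exp (-(ν / γ) * t) *
          (Real.exp (((ν - β) / γ) * T) - Real.exp (((ν - β) / γ) * t)) := funext hf
  have h1 : HasDerivAt (fun s => Real.exp ((ν / γ) * (T - s)))
      (-(ν / γ) * Real.exp ((ν / γ) * (T - t))) t := by
    have hi : HasDerivAt (fun s : ℝ => (ν / γ) * (T - s)) (-(ν / γ)) t := by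
      simpa using ((hasDerivAt_id t).const_sub T).const_mul (ν / γ)
    simpa [mul_comm] using hi.exp
  have h2 : HasDerivAt (fun s => (γ / (ν - β)) * Real.exp (-(ν / γ) * s))
      ((γ / (ν - β)) * (-(ν / γ) * Real.exp (-(ν / γ) * t))) t := by
    have hi : HasDerivAt (fun s : ℝ => -(ν / γ) * s) (-(ν / γ)) t := by
      simpa using (hasDerivAt_id t).const_mul (-(ν / γ))
    exact (by simpa [mul_comm] using hi.exp : HasDerivAt (fun s => Real.exp (-(ν / γ) * s))
      (-(ν / γ) * Real.exp (-(ν / γ) * t)) t).const_mul _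
  have h4 : HasDerivAt (fun s => Real.exp (((ν - β) / γ) * s))
      (((ν - β) / γ) * Real.exp (((ν - β) / γ) * t)) t := by
    have hi : HasDerivAt (fun s : ℝ => ((ν - β) / γ) * s) ((ν - β) / γ) t := by
      simpa using (hasDerivAt_id t).const_mul ((ν - β) / γ)
    simpa [mul_comm] using hi.exp
  have h5 : HasDerivAt (fun s => Real.exp (((ν - β) / γ) * T) - Real.exp (((ν - β) / γ) * s))
      (-(((ν - β) / γ) * Real.exp (((ν - β) / γ) * t))) t := h4.const_sub _
  have h7 := h1.add (h2.mul h5)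
  replace h7 : HasDerivAt f (-(ν / γ) * Real.exp (ν / γ * (T - t)) + (γ / (ν - β) * (-(ν / γ) * Real.exp (-(ν / γ) * t)) * (Real.exp ((ν - β) / γ * T) - Real.exp ((ν - β) / γ * t)) + γ / (ν - β) * Real.exp (-(ν / γ) * t) * -((ν - β) / γ * Real.exp ((ν - β) / γ * t)))) t := by
    rw [hfe]; exact h7
  refine h7.congr_deriv (Eq.symm ?_)
  rw [hf t]
  have hexp : Real.exp (-(ν / γ) * t) * Real.exp (((ν - β) / γ) * t)
      = Real.exp (-(β / γ) * t) := by
    rw [← Real.exp_add]; congr 1; field_simp; ring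
  rw [← hexp]
  have h0 : γ ≠ 0 := hγ.ne'
  have h0' : ν - β ≠ 0 := sub_ne_zero.mpr hνβ
  field_simp
  ring

/-- unconstrained HJB in a first-order model.  With
`f(t;ν)` as in the paper, `ν = (1−γ)(r + (1/(2γ))(μ̃−r𝟙)ᵀã⁻¹(μ̃−r𝟙))`, `ν ≠ β`, and
`v(t,w) = f(t;ν)^γ·w^(1−γ)/(1−γ)`, one has `v(T,w) = w^(1−γ)/(1−γ)` and, for
`(t,w) ∈ [0,T)×(0,∞)`, `0 = ∂ₜv + sup_{(π,c) ∈ ℝ^d×(0,∞)} H(π,c)`, where `H` is the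
Hamiltonian; the supremum is attained at the unique maximizer
`π* = (1/γ)ã⁻¹(μ̃−r𝟙)`, `c* = e^{−(β/γ)t}·w/f(t;ν)`. -/
theorem stmt7 (γ β T : ℝ) (hγ : 0 < γ) (hγ1 : γ ≠ 1) (hβ : 0 < β) (hT : 0 < T)
    (d : ℕ) (hd : 1 ≤ d) (r : ℝ) (μ : Fin d → ℝ) (a : Matrix (Fin d) (Fin d) ℝ)
    (ha : a.PosDef) (ν : ℝ)
    (hν : ν = (1 - γ) * (r + 1 / (2 * γ) *
      ((fun i => μ i - r) ⬝ᵥ a⁻¹.mulVec (fun i => μ i - r))))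
    (hνβ : ν ≠ β)
    (f : ℝ → ℝ)
    (hf : ∀ t : ℝ, f t =
      Real.exp ((ν / γ) * (T - t)) +
        (γ / (ν - β)) * Real.exp (-(ν / γ) * t) *
          (Real.exp (((ν - β) / γ) * T) - Real.exp (((ν - β) / γ) * t)))
    (v : ℝ → ℝ → ℝ)
    (hv : ∀ t w : ℝ, v t w = f t ^ γ * w ^ (1 - γ) / (1 - γ))
    -- the Hamiltonian integrand, expressed with the partial derivatives of `v`
    (H : ℝ → ℝ → (Fin d → ℝ) → ℝ → ℝ)
    (hH : ∀ t w : ℝ, ∀ π : Fin d → ℝ, ∀ c : ℝ, H t w π c =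
      w * deriv (v t) w * (r + π ⬝ᵥ (fun i => μ i - r))
        + w ^ 2 / 2 * deriv (deriv (v t)) w * (π ⬝ᵥ a.mulVec π)
        - c * deriv (v t) w + Real.exp (-β * t) * c ^ (1 - γ) / (1 - γ))
    (πs : Fin d → ℝ) (hπs : πs = (1 / γ) • a⁻¹.mulVec (fun i => μ i - r))
    (cs : ℝ → ℝ → ℝ) (hcs : ∀ t w : ℝ, cs t w = Real.exp (-(β / γ) * t) * w / f t) :
    (∀ w : ℝ, 0 < w → v T w = w ^ (1 - γ) / (1 - γ)) ∧
    ∀ t ∈ Set.Ico 0 T, ∀ w : ℝ, 0 < w →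
      (0 = deriv (fun s => v s w) t + H t w πs (cs t w)) ∧
      (0 < cs t w) ∧
      (∀ π : Fin d → ℝ, ∀ c : ℝ, 0 < c → H t w π c ≤ H t w πs (cs t w)) ∧
      (∀ π : Fin d → ℝ, ∀ c : ℝ, 0 < c →
        H t w π c = H t w πs (cs t w) → π = πs ∧ c = cs t w) := by
  have hγ0 : γ ≠ 0 := hγ.ne'
  have h1γ : (1:ℝ) - γ ≠ 0 := sub_ne_zero.mpr (Ne.symm hγ1)
  have hfT : f T = 1 := fT_eq f hf
  have hfpos : ∀ t ≤ T, 0 < f t := f_pos hγ hνβ f hf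
  have hf' := f_deriv hγ hνβ f hf
  set m : Fin d → ℝ := fun i => μ i - r with hm
  constructor
  · intro w hw
    rw [hv T w, hfT, Real.one_rpow, one_mul]
  · intro t ht w hw
    have hft : 0 < f t := hfpos t ht.2.le
    -- derivatives in w
    have hvt : (v t) = fun x : ℝ => f t ^ γ * x ^ (1 - γ) / (1 - γ) := funext (hv t)
    have hd1 : ∀ x : ℝ, x ≠ 0 → HasDerivAt (v t) (f t ^ γ * x ^ (-γ)) x := by
      intro x hx
      have h := ((Real.hasDerivAt_rpow_const (p := 1 - γ)
        (Or.inl hx)).const_mul (f t ^ γ)).div_const (1 - γ)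
      rw [hvt]
      refine h.congr_deriv (Eq.symm ?_)
      rw [show (1 - γ - 1 : ℝ) = -γ by ring]
      field_simp
    have hD1 : deriv (v t) w = f t ^ γ * w ^ (-γ) := (hd1 w hw.ne').deriv
    have hD2 : deriv (deriv (v t)) w = f t ^ γ * (-γ) * w ^ (-γ - 1) := by
      have hev : deriv (v t) =ᶠ[nhds w] (fun x => f t ^ γ * x ^ (-γ)) := by
        filter_upwards [compl_singleton_mem_nhds hw.ne'] with x hx
        exact (hd1 x hx).deriv
      rw [hev.deriv_eq]
      have h := (Real.hasDerivAt_rpow_const (p := -γ)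
        (Or.inl hw.ne')).const_mul (f t ^ γ)
      rw [h.deriv]; ring
    have hw1 : w * w ^ (-γ) = w ^ (1 - γ) := by
      rw [show (1 - γ : ℝ) = 1 + -γ by ring, Real.rpow_add hw, Real.rpow_one]
    have hw2 : w * w * w ^ (-γ - 1) = w ^ (1 - γ) := by
      rw [show (1 - γ : ℝ) = 1 + (1 + (-γ - 1)) by ring, Real.rpow_add hw,
        Real.rpow_add hw, Real.rpow_one]
      ring
    have hHex : ∀ π : Fin d → ℝ, ∀ c : ℝ, H t w π c =
        (f t ^ γ * w ^ (1 - γ)) * (r + π ⬝ᵥ m)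
          - γ / 2 * (f t ^ γ * w ^ (1 - γ)) * (π ⬝ᵥ a.mulVec π)
          - c * (f t ^ γ * w ^ (-γ))
          + Real.exp (-β * t) * c ^ (1 - γ) / (1 - γ) := by
      intro π c
      rw [hH t w π c, hD1, hD2]
      linear_combination (f t ^ γ * (r + π ⬝ᵥ m)) * hw1
        + (-(γ / 2) * f t ^ γ * (π ⬝ᵥ a.mulVec π)) * hw2
    -- matrix facts
    have hdet : IsUnit a.det := isUnit_iff_ne_zero.mpr ha.det_pos.ne'
    have hams : a.mulVec πs = (1 / γ) • m := by
      rw [hπs, Matrix.mulVec_smul, Matrix.mulVec_mulVec,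
        Matrix.mul_nonsing_inv a hdet, Matrix.one_mulVec]
    have hmγ : m = γ • a.mulVec πs := by
      rw [hams, smul_smul]
      rw [show γ * (1 / γ) = 1 by field_simp, one_smul]
    have hquad : ∀ π : Fin d → ℝ, π ⬝ᵥ m - γ / 2 * (π ⬝ᵥ a.mulVec π)
        = (πs ⬝ᵥ m - γ / 2 * (πs ⬝ᵥ a.mulVec πs))
          - γ / 2 * ((π - πs) ⬝ᵥ a.mulVec (π - πs)) := by
      intro π
      have hcross : πs ⬝ᵥ a.mulVec π = π ⬝ᵥ a.mulVec πs := dot_symm' ha πs π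
      simp only [hmγ, Matrix.mulVec_sub, dotProduct_sub,
        sub_dotProduct, dotProduct_smul, smul_eq_mul]
      linear_combination (-(γ / 2)) * hcross
    have hval : r + πs ⬝ᵥ m - γ / 2 * (πs ⬝ᵥ a.mulVec πs) = ν / (1 - γ) := by
      have h1 : πs ⬝ᵥ m = (1 / γ) * (m ⬝ᵥ a⁻¹.mulVec m) := by
        rw [hπs, smul_dotProduct, smul_eq_mul, dotProduct_comm]
      have h2 : πs ⬝ᵥ a.mulVec πs = (1 / γ) * (πs ⬝ᵥ m) := by
        rw [hams, dotProduct_smul, smul_eq_mul]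
      rw [h2, h1, hν]
      field_simp
      ring
    -- consumption facts
    have hcsval : cs t w = Real.exp (-(β / γ) * t) * w / f t := hcs t w
    have hcspos : 0 < cs t w := by rw [hcsval]; positivity
    have hA : Real.exp (-β * t) * cs t w ^ (-γ) = f t ^ γ * w ^ (-γ) := by
      rw [hcsval, Real.rpow_def_of_pos (by rw [← hcsval]; exact hcspos),
        Real.rpow_def_of_pos hft, Real.rpow_def_of_pos hw,
        ← Real.exp_add, ← Real.exp_add]
      congr 1
      rw [Real.log_div (by positivity) hft.ne',
        Real.log_mul (Real.exp_pos _).ne' hw.ne', Real.log_exp]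
      field_simp
      ring
    have hS : Real.exp (-β * t) * cs t w ^ (1 - γ) = f t ^ γ * w ^ (-γ) * cs t w := by
      rw [show (1 - γ : ℝ) = -γ + 1 by ring, Real.rpow_add hcspos, Real.rpow_one, ← hA]
      ring
    have hAcs : f t ^ γ * w ^ (-γ) * cs t w
        = Real.exp (-(β / γ) * t) * f t ^ (γ - 1) * w ^ (1 - γ) := by
      rw [hcsval, Real.rpow_sub hft, Real.rpow_one, ← hw1]
      field_simp
    -- strict inequality in c
    have hGlt : ∀ c : ℝ, 0 < c → c ≠ cs t w →
        Real.exp (-β * t) * c ^ (1 - γ) / (1 - γ) - c * (f t ^ γ * w ^ (-γ))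
        < Real.exp (-β * t) * cs t w ^ (1 - γ) / (1 - γ)
          - cs t w * (f t ^ γ * w ^ (-γ)) := by
      intro c hc hne
      set u : ℝ := c / cs t w with hu_def
      have hu : 0 < u := div_pos hc hcspos
      have hu1 : u ≠ 1 := by
        intro h
        exact hne ((div_eq_one_iff_eq hcspos.ne').mp h)
      have hb := bern_aux (p := 1 - γ) h1γ (by linarith) hu hu1
      have hP : 0 < Real.exp (-β * t) * cs t w ^ (1 - γ) := by positivity
      have key := mul_lt_mul_of_pos_left hb hP
      have h1 : cs t w ^ (1 - γ) * u ^ (1 - γ) = c ^ (1 - γ) := by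
        rw [← Real.mul_rpow hcspos.le hu.le,
          show cs t w * u = c from by rw [hu_def]; field_simp]
      have e1 : Real.exp (-β * t) * cs t w ^ (1 - γ) * (u ^ (1 - γ) / (1 - γ) - 1 / (1 - γ))
          = Real.exp (-β * t) * c ^ (1 - γ) / (1 - γ)
            - Real.exp (-β * t) * cs t w ^ (1 - γ) / (1 - γ) := by
        linear_combination (Real.exp (-β * t) / (1 - γ)) * h1
      have e2 : Real.exp (-β * t) * cs t w ^ (1 - γ) * (u - 1)
          = c * (f t ^ γ * w ^ (-γ)) - cs t w * (f t ^ γ * w ^ (-γ)) := by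
        rw [hS, hu_def]
        field_simp
      rw [e1, e2] at key
      linarith
    -- π part
    have hDq : 0 < f t ^ γ * w ^ (1 - γ) := by positivity
    have hπeq : ∀ π : Fin d → ℝ,
        (f t ^ γ * w ^ (1 - γ)) * (r + π ⬝ᵥ m)
          - γ / 2 * (f t ^ γ * w ^ (1 - γ)) * (π ⬝ᵥ a.mulVec π)
        = (f t ^ γ * w ^ (1 - γ)) * (r + πs ⬝ᵥ m)
          - γ / 2 * (f t ^ γ * w ^ (1 - γ)) * (πs ⬝ᵥ a.mulVec πs)
          - γ / 2 * (f t ^ γ * w ^ (1 - γ)) * ((π - πs) ⬝ᵥ a.mulVec (π - πs)) := by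
      intro π
      linear_combination (f t ^ γ * w ^ (1 - γ)) * hquad π
    have hsnn : ∀ π : Fin d → ℝ, 0 ≤ (π - πs) ⬝ᵥ a.mulVec (π - πs) := by
      intro π
      rcases eq_or_ne π πs with h | h
      · simp [h]
      · exact (pos_dot' ha (sub_ne_zero.mpr h)).le
    -- time derivative
    have hvt' : (fun s => v s w) = fun s => f s ^ γ * w ^ (1 - γ) / (1 - γ) :=
      funext fun s => hv s w
    have hfγ : f t ^ (γ - 1) * f t = f t ^ γ := by
      rw [Real.rpow_sub hft, Real.rpow_one]
      field_simp
    have hdt2 : HasDerivAt (fun s => v s w)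
        (-(ν / (1 - γ)) * (f t ^ γ * w ^ (1 - γ))
          - γ / (1 - γ) * (Real.exp (-(β / γ) * t) * f t ^ (γ - 1) * w ^ (1 - γ))) t := by
      rw [hvt']
      have h := ((HasDerivAt.rpow_const (p := γ) (hf' t)
        (Or.inl hft.ne')).mul_const (w ^ (1 - γ))).div_const (1 - γ)
      refine h.congr_deriv (Eq.symm ?_)
      rw [← hfγ]
      field_simp
    have hHs : H t w πs (cs t w)
        = ν / (1 - γ) * (f t ^ γ * w ^ (1 - γ))
          + γ / (1 - γ) * (Real.exp (-(β / γ) * t) * f t ^ (γ - 1) * w ^ (1 - γ)) := by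
      rw [hHex πs (cs t w), hS]
      have hIinv : (1 - γ) * (1 - γ)⁻¹ = 1 := mul_inv_cancel₀ h1γ
      linear_combination (f t ^ γ * w ^ (1 - γ)) * hval + (1 / (1 - γ) - 1) * hAcs
        + (Real.exp (-(β / γ) * t) * f t ^ (γ - 1) * w ^ (1 - γ)) * hIinv
    refine ⟨?_, hcspos, ?_, ?_⟩
    · rw [hdt2.deriv, hHs]; ring
    · intro π c hc
      rw [hHex π c, hHex πs (cs t w), hπeq π]
      have h1 : 0 ≤ γ / 2 * (f t ^ γ * w ^ (1 - γ)) * ((π - πs) ⬝ᵥ a.mulVec (π - πs)) := by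
        have := hsnn π
        positivity
      rcases eq_or_ne c (cs t w) with h | h
      · rw [h]; linarith
      · have := hGlt c hc h
        linarith
    · intro π c hc heqH
      rw [hHex π c, hHex πs (cs t w), hπeq π] at heqH
      have h1 : 0 ≤ γ / 2 * (f t ^ γ * w ^ (1 - γ)) * ((π - πs) ⬝ᵥ a.mulVec (π - πs)) := by
        have := hsnn π
        positivity
      have hcle : Real.exp (-β * t) * c ^ (1 - γ) / (1 - γ) - c * (f t ^ γ * w ^ (-γ))
          ≤ Real.exp (-β * t) * cs t w ^ (1 - γ) / (1 - γ)
            - cs t w * (f t ^ γ * w ^ (-γ)) := by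
        rcases eq_or_ne c (cs t w) with h | h
        · rw [h]
        · exact (hGlt c hc h).le
      constructor
      · by_contra hne
        have hpos := pos_dot' ha (sub_ne_zero.mpr hne)
        have : 0 < γ / 2 * (f t ^ γ * w ^ (1 - γ)) * ((π - πs) ⬝ᵥ a.mulVec (π - πs)) := by
          positivity
        linarith
      · by_contra hne
        have := hGlt c hc hne
        linarith
end
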